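/- arXiv:2206.02271 — 2 statements merged into one kernel-verified Lean document; each statement's English description precedes it below -/
import Mathlib

section
/- Let V, W be independent non-negative random variables with P(V > v) ~ c_V v^{-γ_V} and P(W > w) ~ c_W w^{-γ_W} as v, w → ∞, where 0 < γ_V < γ_W < 2 and c_V, c_W > 0. Then P(V·W > z) ~ c_V · E[W^{γ_V}] · z^{-γ_V} as z → ∞. -/
open MeasureTheory Filter ProbabilityTheory Set

lemma breiman_integrable_rpow {Ω : Type*} [MeasurableSpace Ω] (μ : Measure Ω)
    [IsProbabilityMeasure μ] (W : Ω → ℝ) (hWmeas : Measurable W) (hWpos : ∀ ω, 0 ≤ W ω)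
    (γV γW cW : ℝ) (hγV : 0 < γV) (hγ : γV < γW) (hcW : 0 < cW)
    (htailW : Tendsto (fun w : ℝ => (μ {ω | W ω > w}).toReal / (cW * w ^ (-γW)))
      atTop (nhds 1)) :
    Integrable (fun ω => W ω ^ γV) μ := by
  obtain ⟨t1, ht1⟩ := eventually_atTop.mp
    (htailW.eventually_lt_const (show (1:ℝ) < 2 by norm_num))
  set t0 : ℝ := max t1 1 with ht0def
  have ht0one : (1:ℝ) ≤ t0 := le_max_right _ _
  have ht0pos : (0:ℝ) < t0 := lt_of_lt_of_le one_pos ht0one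
  have htail : ∀ t : ℝ, t0 ≤ t → (μ {ω | W ω > t}).toReal ≤ 2 * (cW * t ^ (-γW)) := by
    intro t ht
    have htpos : (0:ℝ) < t := lt_of_lt_of_le ht0pos ht
    have hden : 0 < cW * t ^ (-γW) := by positivity
    have h2 := ht1 t (le_trans (le_max_left _ _) ht)
    calc (μ {ω | W ω > t}).toReal
        = (μ {ω | W ω > t}).toReal / (cW * t ^ (-γW)) * (cW * t ^ (-γW)) := by
          field_simp
      _ ≤ 2 * (cW * t ^ (-γW)) := mul_le_mul_of_nonneg_right h2.le hden.le
  have hm : Measurable fun ω => W ω ^ γV :=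
    (Real.continuous_rpow_const hγV.le).measurable.comp hWmeas
  refine ⟨hm.aestronglyMeasurable, ?_⟩
  rw [hasFiniteIntegral_iff_norm]
  have hnorm : ∀ ω, ENNReal.ofReal ‖W ω ^ γV‖ = ENNReal.ofReal (W ω ^ γV) := by
    intro ω; rw [Real.norm_of_nonneg (Real.rpow_nonneg (hWpos ω) _)]
  simp only [hnorm]
  rw [lintegral_rpow_eq_lintegral_meas_lt_mul μ (ae_of_all _ hWpos)
    hWmeas.aemeasurable hγV]
  refine ENNReal.mul_lt_top ENNReal.ofReal_lt_top ?_
  rw [show Ioi (0:ℝ) = Ioc 0 t0 ∪ Ioi t0 from (Ioc_union_Ioi_eq_Ioi ht0pos.le).symm,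
    lintegral_union measurableSet_Ioi Ioc_disjoint_Ioi_same]
  refine (ENNReal.add_lt_top).mpr ⟨?_, ?_⟩
  · -- near 0
    have hb : ∀ t ∈ Ioc (0:ℝ) t0,
        μ {a | t < W a} * ENNReal.ofReal (t ^ (γV - 1)) ≤ ENNReal.ofReal (t ^ (γV - 1)) := by
      intro t _
      calc μ {a | t < W a} * ENNReal.ofReal (t ^ (γV - 1))
          ≤ 1 * ENNReal.ofReal (t ^ (γV - 1)) := mul_le_mul_left prob_le_one _
        _ = _ := one_mul _
    refine lt_of_le_of_lt (setLIntegral_mono' measurableSet_Ioc hb) ?_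
    have hint : IntegrableOn (fun t : ℝ => t ^ (γV - 1)) (Ioc 0 t0) volume := by
      have := intervalIntegral.intervalIntegrable_rpow' (a := 0) (b := t0) (show (-1:ℝ) < γV - 1 by linarith)
      rwa [intervalIntegrable_iff, uIoc_of_le ht0pos.le] at this
    refine lt_of_le_of_lt (lintegral_mono fun t => Real.ofReal_le_enorm _) ?_
    exact hint.hasFiniteIntegral
  · -- tail
    have hb : ∀ t ∈ Ioi t0, μ {a | t < W a} * ENNReal.ofReal (t ^ (γV - 1))
        ≤ ENNReal.ofReal ((2 * (cW * t ^ (-γW))) * t ^ (γV - 1)) := by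
      intro t ht
      have ht' : t0 ≤ t := (mem_Ioi.mp ht).le
      have htpos : (0:ℝ) < t := lt_of_lt_of_le ht0pos ht'
      have h1 : μ {a | t < W a} ≤ ENNReal.ofReal (2 * (cW * t ^ (-γW))) := by
        have hfin : μ {a | t < W a} ≠ ⊤ := measure_ne_top μ _
        rw [← ENNReal.ofReal_toReal hfin]
        exact ENNReal.ofReal_le_ofReal (htail t ht')
      rw [ENNReal.ofReal_mul (by positivity : (0:ℝ) ≤ 2 * (cW * t ^ (-γW)))]
      exact mul_le_mul_left h1 _
    refine lt_of_le_of_lt (setLIntegral_mono' measurableSet_Ioi hb) ?_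
    have hexp : ∀ t ∈ Ioi t0, (2 * (cW * t ^ (-γW))) * t ^ (γV - 1)
        = (2 * cW) * t ^ (γV - γW - 1) := by
      intro t ht
      have htpos : (0:ℝ) < t := lt_trans ht0pos (mem_Ioi.mp ht)
      rw [show γV - γW - 1 = -γW + (γV - 1) by ring, Real.rpow_add htpos]
      ring
    rw [setLIntegral_congr_fun measurableSet_Ioi (fun t ht => by
      rw [hexp t ht])]
    have hint : IntegrableOn (fun t : ℝ => (2 * cW) * t ^ (γV - γW - 1)) (Ioi t0) volume :=
      (integrableOn_Ioi_rpow_of_lt (by linarith) ht0pos).const_mul _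
    refine lt_of_le_of_lt (lintegral_mono fun t => Real.ofReal_le_enorm _) ?_
    exact hint.hasFiniteIntegral


/-- Breiman-type lemma: if `V, W ≥ 0` are independent with
`P(V > v) ~ c_V v^{-γ_V}` and `P(W > w) ~ c_W w^{-γ_W}`, `0 < γ_V < γ_W < 2`, then
`P(V·W > z) ~ c_V E[W^{γ_V}] z^{-γ_V}` as `z → ∞`. -/
theorem stmt6 {Ω : Type*} [MeasurableSpace Ω] (μ : Measure Ω) [IsProbabilityMeasure μ]
    (V W : Ω → ℝ) (hVmeas : Measurable V) (hWmeas : Measurable W)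
    (hVpos : ∀ ω, 0 ≤ V ω) (hWpos : ∀ ω, 0 ≤ W ω)
    (hindep : IndepFun V W μ)
    (γV γW cV cW : ℝ) (hγV : 0 < γV) (hγ : γV < γW) (hγW : γW < 2)
    (hcV : 0 < cV) (hcW : 0 < cW)
    (htailV : Tendsto (fun v : ℝ => (μ {ω | V ω > v}).toReal / (cV * v ^ (-γV)))
      atTop (nhds 1))
    (htailW : Tendsto (fun w : ℝ => (μ {ω | W ω > w}).toReal / (cW * w ^ (-γW)))
      atTop (nhds 1)) :
    Tendsto (fun z : ℝ =>
        (μ {ω | V ω * W ω > z}).toReal / (cV * (∫ ω, W ω ^ γV ∂μ) * z ^ (-γV)))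
      atTop (nhds 1) := by
  classical
  have hγWpos : 0 < γW := lt_trans hγV hγ
  set νV := μ.map V with hνVdef
  set νW := μ.map W with hνWdef
  haveI : IsProbabilityMeasure νV := Measure.isProbabilityMeasure_map hVmeas.aemeasurable
  haveI : IsProbabilityMeasure νW := Measure.isProbabilityMeasure_map hWmeas.aemeasurable
  have hmapV : ∀ s : ℝ, μ {ω | V ω > s} = νV (Ioi s) := fun s =>
    (Measure.map_apply hVmeas measurableSet_Ioi).symm
  have hmapW : ∀ s : ℝ, μ {ω | W ω > s} = νW (Ioi s) := fun s =>
    (Measure.map_apply hWmeas measurableSet_Ioi).symm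
  have htV : Tendsto (fun s : ℝ => (νV (Ioi s)).toReal / (cV * s ^ (-γV))) atTop (nhds 1) := by
    simpa only [hmapV] using htailV
  have htW : Tendsto (fun s : ℝ => (νW (Ioi s)).toReal / (cW * s ^ (-γW))) atTop (nhds 1) := by
    simpa only [hmapW] using htailW
  -- integrability of W ^ γV
  have hInt : Integrable (fun ω => W ω ^ γV) μ :=
    breiman_integrable_rpow μ W hWmeas hWpos γV γW cW hγV hγ hcW htailW
  have hg_meas : Measurable fun w : ℝ => w ^ γV :=
    (Real.continuous_rpow_const hγV.le).measurable
  have hIntν : Integrable (fun w : ℝ => w ^ γV) νW :=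
    (integrable_map_measure hg_meas.aestronglyMeasurable hWmeas.aemeasurable).mpr hInt
  have hI_eq : ∫ w, w ^ γV ∂νW = ∫ ω, W ω ^ γV ∂μ :=
    integral_map hWmeas.aemeasurable hg_meas.aestronglyMeasurable
  set I := ∫ ω, W ω ^ γV ∂μ with hIdef
  -- positivity of I
  have hIpos : 0 < I := by
    obtain ⟨w1, hw1⟩ := eventually_atTop.mp
      (htailW.eventually_const_lt (show (1:ℝ)/2 < 1 by norm_num))
    set w0 : ℝ := max w1 1 with hw0def
    have hw0one : (1:ℝ) ≤ w0 := le_max_right _ _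
    have hw0pos : (0:ℝ) < w0 := lt_of_lt_of_le one_pos hw0one
    have hden : 0 < cW * w0 ^ (-γW) := by positivity
    have hnum : 0 < (μ {ω | W ω > w0}).toReal := by
      have h2 := hw1 w0 (le_max_left _ _)
      have hpos : 0 < (μ {ω | W ω > w0}).toReal / (cW * w0 ^ (-γW)) :=
        lt_trans (by norm_num) h2
      rcases div_pos_iff.mp hpos with ⟨h, _⟩ | ⟨_, h⟩
      · exact h
      · linarith
    have hmeasset : MeasurableSet {ω | W ω > w0} := measurableSet_lt measurable_const hWmeas
    have hle : ∫ ω, Set.indicator {ω | W ω > w0} (fun _ => (1:ℝ)) ω ∂μ ≤ I := by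
      refine integral_mono ((integrable_const (1:ℝ)).indicator hmeasset) hInt fun ω => ?_
      by_cases hω : ω ∈ {ω | W ω > w0}
      · rw [Set.indicator_of_mem hω]
        exact Real.one_le_rpow (le_trans hw0one (le_of_lt hω)) hγV.le
      · rw [Set.indicator_of_notMem hω]
        exact Real.rpow_nonneg (hWpos ω) _
    have heq : ∫ ω, Set.indicator {ω | W ω > w0} (fun _ => (1:ℝ)) ω ∂μ
        = (μ {ω | W ω > w0}).toReal := by
      rw [integral_indicator_const (1:ℝ) hmeasset]; simp; rfl
    rw [heq] at hle
    linarith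
  -- a.e. nonnegativity under νW
  have hWae : ∀ᵐ w ∂νW, 0 ≤ w := by
    rw [hνWdef, ae_map_iff hWmeas.aemeasurable measurableSet_Ici]
    exact ae_of_all _ hWpos
  -- product representation
  have hsmeas : ∀ z : ℝ, MeasurableSet {p : ℝ × ℝ | p.1 * p.2 > z} := fun z =>
    measurableSet_lt measurable_const (measurable_fst.mul measurable_snd)
  have hprod : μ.map (fun ω => (W ω, V ω)) = νW.prod νV :=
    (indepFun_iff_map_prod_eq_prod_map_map hWmeas.aemeasurable hVmeas.aemeasurable).mp
      hindep.symm
  have hkey : ∀ z : ℝ, μ {ω | V ω * W ω > z} = ∫⁻ w, νV {v | w * v > z} ∂νW := by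
    intro z
    have h1 : {ω | V ω * W ω > z} = (fun ω => (W ω, V ω)) ⁻¹' {p : ℝ × ℝ | p.1 * p.2 > z} := by
      ext ω; simp [mul_comm]
    rw [h1, ← Measure.map_apply (hWmeas.prodMk hVmeas) (hsmeas z), hprod,
      Measure.prod_apply (hsmeas z)]
    rfl
  have hg_m : ∀ z : ℝ, Measurable fun w : ℝ => νV {v | w * v > z} := fun z =>
    measurable_measure_prodMk_left (hsmeas z)
  have hgz_int : ∀ z : ℝ, Integrable (fun w : ℝ => (νV {v | w * v > z}).toReal) νW := by
    intro z
    refine Integrable.mono' (integrable_const (1:ℝ))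
      ((hg_m z).ennreal_toReal).aestronglyMeasurable (ae_of_all _ fun w => ?_)
    rw [Real.norm_of_nonneg ENNReal.toReal_nonneg]
    exact ENNReal.toReal_le_of_le_ofReal one_pos.le (by simpa using prob_le_one)
  have hf_eq : ∀ z : ℝ, (μ {ω | V ω * W ω > z}).toReal
      = ∫ w, (νV {v | w * v > z}).toReal ∂νW := by
    intro z
    rw [hkey z, integral_toReal (hg_m z).aemeasurable
      (ae_of_all _ fun w => lt_of_le_of_lt prob_le_one ENNReal.one_lt_top)]
  -- the exponent β
  set β : ℝ := (γV / γW + 1) / 2 with hβdef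
  have hq1 : γV / γW < 1 := (div_lt_one hγWpos).mpr hγ
  have hqpos : 0 < γV / γW := div_pos hγV hγWpos
  have hβ1 : β < 1 := by rw [hβdef]; linarith
  have hβpos : 0 < β := by rw [hβdef]; linarith
  have hβγ : γV < β * γW := by
    have h1 : γV / γW < β := by rw [hβdef]; linarith
    calc γV = (γV / γW) * γW := by field_simp
      _ < β * γW := mul_lt_mul_of_pos_right h1 hγWpos
  -- main part via dominated convergence
  have hA : Tendsto (fun z : ℝ =>
      (∫ w, Set.indicator (Iic (z ^ β)) (fun w => (νV {v | w * v > z}).toReal) w ∂νW)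
        / (cV * z ^ (-γV))) atTop (nhds I) := by
    obtain ⟨s1, hs1⟩ := eventually_atTop.mp
      (htV.eventually_lt_const (show (1:ℝ) < 2 by norm_num))
    set s0 : ℝ := max s1 1 with hs0def
    have hs0one : (1:ℝ) ≤ s0 := le_max_right _ _
    have hratio : ∀ s : ℝ, s0 ≤ s → (νV (Ioi s)).toReal ≤ 2 * (cV * s ^ (-γV)) := by
      intro s hs
      have hspos : (0:ℝ) < s := lt_of_lt_of_le (lt_of_lt_of_le one_pos hs0one) hs
      have hden : 0 < cV * s ^ (-γV) := by positivity
      have h2 := hs1 s (le_trans (le_max_left _ _) hs)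
      calc (νV (Ioi s)).toReal
          = (νV (Ioi s)).toReal / (cV * s ^ (-γV)) * (cV * s ^ (-γV)) := by field_simp
        _ ≤ 2 * (cV * s ^ (-γV)) := mul_le_mul_of_nonneg_right h2.le hden.le
    have hset : ∀ z w : ℝ, 0 < w → {v : ℝ | w * v > z} = Ioi (z / w) := by
      intro z w hw
      ext v
      simp only [mem_setOf_eq, mem_Ioi, gt_iff_lt, div_lt_iff₀ hw, mul_comm]
    have halg : ∀ z w : ℝ, 0 < z → 0 < w →
        (νV (Ioi (z / w))).toReal / (cV * z ^ (-γV))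
          = (νV (Ioi (z / w))).toReal / (cV * (z / w) ^ (-γV)) * w ^ γV := by
      intro z w hz hw
      have h1 : (z / w) ^ (-γV) = z ^ (-γV) / w ^ (-γV) := Real.div_rpow hz.le hw.le _
      have hwp : (0:ℝ) < w ^ (-γV) := Real.rpow_pos_of_pos hw _
      have hzp : (0:ℝ) < z ^ (-γV) := Real.rpow_pos_of_pos hz _
      have h2 : w ^ γV * w ^ (-γV) = 1 := by
        rw [← Real.rpow_add hw]; simp
      rw [h1]
      rw [div_eq_div_iff (by positivity) (by positivity)] at *
      field_simp
      nlinarith [h2, ENNReal.toReal_nonneg (a := νV (Ioi (z / w)))]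
    have hDCT := tendsto_integral_filter_of_dominated_convergence (μ := νW) (l := atTop)
      (F := fun (z : ℝ) (w : ℝ) =>
        Set.indicator (Iic (z ^ β)) (fun w => (νV {v | w * v > z}).toReal) w
          / (cV * z ^ (-γV)))
      (f := fun w : ℝ => w ^ γV) (bound := fun w : ℝ => 2 * w ^ γV)
      ?_ ?_ (hIntν.const_mul 2) ?_
    · refine Tendsto.congr (fun z => ?_) (by rwa [hI_eq] at hDCT)
      exact integral_div _ _
    · exact Eventually.of_forall fun z =>
        (((hg_m z).ennreal_toReal.indicator measurableSet_Iic).div_const _).aestronglyMeasurable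
    · have h1 : Tendsto (fun z : ℝ => z ^ (1 - β)) atTop atTop :=
        tendsto_rpow_atTop (by linarith)
      filter_upwards [h1.eventually_ge_atTop s0, eventually_ge_atTop (1:ℝ)] with z hz1 hz2
      filter_upwards [hWae] with w hw
      have hzpos : (0:ℝ) < z := lt_of_lt_of_le one_pos hz2
      have hden : (0:ℝ) < cV * z ^ (-γV) := by positivity
      by_cases hmem : w ≤ z ^ β
      · rw [Set.indicator_of_mem (mem_Iic.mpr hmem)]
        rcases eq_or_lt_of_le hw with hw0 | hwpos
        · have hempty : {v : ℝ | w * v > z} = ∅ := by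
            ext v
            simp only [mem_setOf_eq, mem_empty_iff_false, iff_false, gt_iff_lt, not_lt, ← hw0]
            nlinarith
          rw [hempty]
          simp only [measure_empty, ENNReal.toReal_zero, zero_div, norm_zero]
          positivity
        · rw [hset z w hwpos]
          have hzw : s0 ≤ z / w := by
            have h3 : z ^ (1 - β) ≤ z / w := by
              rw [Real.rpow_sub hzpos, Real.rpow_one]
              exact div_le_div_of_nonneg_left hzpos.le hwpos hmem
            linarith
          have hzwpos : 0 < z / w := lt_of_lt_of_le (lt_of_lt_of_le one_pos hs0one) hzw
          rw [Real.norm_of_nonneg (div_nonneg ENNReal.toReal_nonneg hden.le),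
            halg z w hzpos hwpos]
          have hr2 : (νV (Ioi (z / w))).toReal / (cV * (z / w) ^ (-γV)) ≤ 2 := by
            rw [div_le_iff₀ (by positivity)]
            calc (νV (Ioi (z / w))).toReal ≤ 2 * (cV * (z / w) ^ (-γV)) := hratio _ hzw
              _ = 2 * (cV * (z / w) ^ (-γV)) := rfl
          exact mul_le_mul_of_nonneg_right hr2 (Real.rpow_nonneg hw _)
      · rw [Set.indicator_of_notMem (by simpa using hmem)]
        simp only [zero_div, norm_zero]
        positivity
    · filter_upwards [hWae] with w hw
      rcases eq_or_lt_of_le hw with hw0 | hwpos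
      · have hlim0 : (fun _ : ℝ => (0:ℝ)) =ᶠ[atTop] fun z =>
            Set.indicator (Iic (z ^ β)) (fun w => (νV {v | w * v > z}).toReal) w
              / (cV * z ^ (-γV)) := by
          filter_upwards [eventually_ge_atTop (1:ℝ)] with z hz
          have hempty : {v : ℝ | w * v > z} = ∅ := by
            ext v
            simp only [mem_setOf_eq, mem_empty_iff_false, iff_false, gt_iff_lt, not_lt, ← hw0]
            nlinarith
          by_cases hmem : w ≤ z ^ β
          · rw [Set.indicator_of_mem (mem_Iic.mpr hmem), hempty]
            simp
          · rw [Set.indicator_of_notMem (by simpa using hmem)]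
            simp
        have : w ^ γV = 0 := by rw [← hw0, Real.zero_rpow hγV.ne']
        rw [this]
        exact Tendsto.congr' hlim0 tendsto_const_nhds
      · have hev : (fun z => (νV (Ioi (z / w))).toReal / (cV * (z / w) ^ (-γV)) * w ^ γV)
            =ᶠ[atTop] fun z =>
              Set.indicator (Iic (z ^ β)) (fun w => (νV {v | w * v > z}).toReal) w
                / (cV * z ^ (-γV)) := by
          filter_upwards [(tendsto_rpow_atTop hβpos).eventually_ge_atTop w,
            eventually_gt_atTop (0:ℝ)] with z hz1 hz2
          rw [Set.indicator_of_mem (mem_Iic.mpr hz1), hset z w hwpos, halg z w hz2 hwpos]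
        have hlim0 : Tendsto (fun z : ℝ => (νV (Ioi (z / w))).toReal
            / (cV * (z / w) ^ (-γV))) atTop (nhds 1) :=
          htV.comp (Tendsto.atTop_div_const hwpos tendsto_id)
        have h5 := hlim0.mul_const (w ^ γV)
        rw [one_mul] at h5
        exact Tendsto.congr' hev h5
  -- tail part
  have hB : Tendsto (fun z : ℝ =>
      (∫ w, Set.indicator (Ioi (z ^ β)) (fun w => (νV {v | w * v > z}).toReal) w ∂νW)
        / (cV * z ^ (-γV))) atTop (nhds 0) := by
    obtain ⟨t1, ht1⟩ := eventually_atTop.mp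
      (htW.eventually_lt_const (show (1:ℝ) < 2 by norm_num))
    set t0 : ℝ := max t1 1 with ht0def
    have ht0one : (1:ℝ) ≤ t0 := le_max_right _ _
    have htail : ∀ t : ℝ, t0 ≤ t → (νW (Ioi t)).toReal ≤ 2 * (cW * t ^ (-γW)) := by
      intro t ht
      have htpos : (0:ℝ) < t := lt_of_lt_of_le (lt_of_lt_of_le one_pos ht0one) ht
      have hden : 0 < cW * t ^ (-γW) := by positivity
      have h2 := ht1 t (le_trans (le_max_left _ _) ht)
      calc (νW (Ioi t)).toReal
          = (νW (Ioi t)).toReal / (cW * t ^ (-γW)) * (cW * t ^ (-γW)) := by field_simp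
        _ ≤ 2 * (cW * t ^ (-γW)) := mul_le_mul_of_nonneg_right h2.le hden.le
    have hupper : Tendsto (fun z : ℝ => (2 * cW / cV) * z ^ (γV - β * γW)) atTop (nhds 0) := by
      have h6 := (tendsto_rpow_neg_atTop (show 0 < β * γW - γV by linarith)).const_mul
        (2 * cW / cV)
      simpa [mul_zero, show -(β * γW - γV) = γV - β * γW by ring] using h6
    refine tendsto_of_tendsto_of_tendsto_of_le_of_le' tendsto_const_nhds hupper ?_ ?_
    · filter_upwards [eventually_ge_atTop (1:ℝ)] with z hz
      have hzpos : (0:ℝ) < z := lt_of_lt_of_le one_pos hz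
      have hden : (0:ℝ) < cV * z ^ (-γV) := by positivity
      refine div_nonneg (integral_nonneg fun w => ?_) hden.le
      exact Set.indicator_nonneg (fun w _ => ENNReal.toReal_nonneg) w
    · have h1 : Tendsto (fun z : ℝ => z ^ β) atTop atTop := tendsto_rpow_atTop hβpos
      filter_upwards [h1.eventually_ge_atTop t0, eventually_ge_atTop (1:ℝ)] with z hz1 hz2
      have hzpos : (0:ℝ) < z := lt_of_lt_of_le one_pos hz2
      have hden : (0:ℝ) < cV * z ^ (-γV) := by positivity
      have hint_le : (∫ w, Set.indicator (Ioi (z ^ β))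
          (fun w => (νV {v | w * v > z}).toReal) w ∂νW) ≤ (νW (Ioi (z ^ β))).toReal := by
        have hm1 : (∫ w, Set.indicator (Ioi (z ^ β))
            (fun w => (νV {v | w * v > z}).toReal) w ∂νW)
            ≤ ∫ w, Set.indicator (Ioi (z ^ β)) (fun _ => (1:ℝ)) w ∂νW := by
          refine integral_mono ((hgz_int z).indicator measurableSet_Ioi)
            ((integrable_const (1:ℝ)).indicator measurableSet_Ioi) fun w => ?_
          refine Set.indicator_le_indicator ?_
          exact ENNReal.toReal_le_of_le_ofReal one_pos.le (by simpa using prob_le_one)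
        have hm2 : ∫ w, Set.indicator (Ioi (z ^ β)) (fun _ => (1:ℝ)) w ∂νW
            = (νW (Ioi (z ^ β))).toReal := by
          rw [integral_indicator_const (1:ℝ) measurableSet_Ioi]; simp; rfl
        linarith
      have hub := htail _ hz1
      have hexp : 2 * (cW * (z ^ β) ^ (-γW)) / (cV * z ^ (-γV))
          = (2 * cW / cV) * z ^ (γV - β * γW) := by
        have e1 : (z ^ β) ^ (-γW) = z ^ (β * -γW) := (Real.rpow_mul hzpos.le _ _).symm
        have e2 : z ^ (β * -γW) / z ^ (-γV) = z ^ (γV - β * γW) := by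
          rw [← Real.rpow_sub hzpos]
          ring_nf
        have hzp : (0:ℝ) < z ^ (-γV) := Real.rpow_pos_of_pos hzpos _
        rw [e1, ← e2]
        field_simp
      calc (∫ w, Set.indicator (Ioi (z ^ β))
            (fun w => (νV {v | w * v > z}).toReal) w ∂νW) / (cV * z ^ (-γV))
          ≤ (νW (Ioi (z ^ β))).toReal / (cV * z ^ (-γV)) :=
            (div_le_div_iff_of_pos_right hden).mpr hint_le
        _ ≤ 2 * (cW * (z ^ β) ^ (-γW)) / (cV * z ^ (-γV)) :=
            (div_le_div_iff_of_pos_right hden).mpr hub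
        _ = (2 * cW / cV) * z ^ (γV - β * γW) := hexp
  -- combine
  have hsplit : ∀ z : ℝ, (μ {ω | V ω * W ω > z}).toReal / (cV * z ^ (-γV))
      = (∫ w, Set.indicator (Iic (z ^ β)) (fun w => (νV {v | w * v > z}).toReal) w ∂νW)
          / (cV * z ^ (-γV))
        + (∫ w, Set.indicator (Ioi (z ^ β)) (fun w => (νV {v | w * v > z}).toReal) w ∂νW)
          / (cV * z ^ (-γV)) := by
    intro z
    rw [← add_div, ← integral_add ((hgz_int z).indicator measurableSet_Iic)
      ((hgz_int z).indicator measurableSet_Ioi), hf_eq z]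
    congr 1
    apply integral_congr_ae
    refine ae_of_all _ fun w => ?_
    by_cases h : w ≤ z ^ β
    · simp [Set.indicator_apply, mem_Iic, mem_Ioi, h, not_lt.mpr h]
    · simp [Set.indicator_apply, mem_Iic, mem_Ioi, h, lt_of_not_ge h]
  have hmain : Tendsto (fun z : ℝ =>
      (μ {ω | V ω * W ω > z}).toReal / (cV * z ^ (-γV))) atTop (nhds I) := by
    have := hA.add hB
    rw [add_zero] at this
    exact this.congr fun z => (hsplit z).symm
  have hfinal := hmain.div_const I
  rw [div_self hIpos.ne'] at hfinal
  refine hfinal.congr fun z => ?_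
  rw [div_div]
  congr 1
  ring
end

section
/- Let V, W be independent non-negative random variables with P(V > v) ~ c_V v^{-γ} and P(W > w) ~ c_W w^{-γ} as v, w → ∞, for the same exponent γ ∈ (0,2) and constants c_V, c_W > 0. Then P(V·W > z) ~ γ c_V c_W · log(z) · z^{-γ} as z → ∞. -/
open MeasureTheory Filter ProbabilityTheory

open Set

open scoped ENNReal

lemma sq_aux (R : ℝ → ℝ)
    (h : ∀ δ : ℝ, 0 < δ → δ < 1 → ∃ L U : ℝ → ℝ,
      Tendsto L atTop (nhds ((1-δ)*(1-δ))) ∧ Tendsto U atTop (nhds ((1+δ)*(1+δ))) ∧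
      ∀ᶠ z in atTop, L z ≤ R z ∧ R z ≤ U z) :
    Tendsto R atTop (nhds 1) := by
  rw [tendsto_order]
  constructor
  · intro c hc
    set δ : ℝ := min ((1-c)/2) (1/2) with hδdef
    have hδ0 : 0 < δ := lt_min (by linarith) (by norm_num)
    have hδ1 : δ < 1 := lt_of_le_of_lt (min_le_right _ _) (by norm_num)
    have hc' : c < (1-δ)*(1-δ) := by
      have h1 : δ ≤ (1-c)/2 := min_le_left _ _
      nlinarith [sq_nonneg δ]
    obtain ⟨L, U, hL, hU, hev⟩ := h δ hδ0 hδ1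
    filter_upwards [hL.eventually (eventually_gt_nhds hc'), hev] with z h1 h2
    exact lt_of_lt_of_le h1 h2.1
  · intro c hc
    set δ : ℝ := min ((c-1)/4) (1/2) with hδdef
    have hδ0 : 0 < δ := lt_min (by linarith) (by norm_num)
    have hδ1 : δ < 1 := lt_of_le_of_lt (min_le_right _ _) (by norm_num)
    have hc' : (1+δ)*(1+δ) < c := by
      have h1 : δ ≤ (c-1)/4 := min_le_left _ _
      have h2 : δ ≤ 1/2 := min_le_right _ _
      nlinarith
    obtain ⟨L, U, hL, hU, hev⟩ := h δ hδ0 hδ1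
    filter_upwards [hU.eventually (eventually_lt_nhds hc'), hev] with z h1 h2
    exact lt_of_le_of_lt h2.2 h1

lemma m_repr (ν : Measure ℝ) [IsFiniteMeasure ν] {γ : ℝ} (hγ : 0 < γ) (x : ℝ) :
    ∫⁻ v in Ioc 0 x, ENNReal.ofReal (v ^ γ) ∂ν
      = ∫⁻ s in Ioi (0:ℝ), ENNReal.ofReal (γ * s ^ (γ-1)) * ν (Ioc s x) := by
  classical
  set f : ℝ × ℝ → ℝ≥0∞ :=
    fun p => Set.indicator {q : ℝ × ℝ | 0 < q.2 ∧ q.2 < q.1}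
      (fun q => ENNReal.ofReal (γ * q.2 ^ (γ-1))) p with hf
  have hfmeas : Measurable f := by
    apply Measurable.indicator
    · exact (measurable_const.mul (measurable_snd.pow_const _)).ennreal_ofReal
    · exact (measurableSet_lt measurable_const measurable_snd).inter
        (measurableSet_lt measurable_snd measurable_fst)
  -- inner integral in s equals ofReal (v ^ γ) for v > 0
  have hinner : ∀ v : ℝ, 0 < v → ∫⁻ s, f (v, s) = ENNReal.ofReal (v ^ γ) := by
    intro v hv
    have hset : ∫⁻ s, f (v, s)
        = ∫⁻ s, Set.indicator (Ioo 0 v) (fun s => ENNReal.ofReal (γ * s ^ (γ-1))) s := by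
      refine lintegral_congr fun s => ?_
      simp only [hf, Set.indicator, mem_setOf_eq, mem_Ioo]
    rw [hset, lintegral_indicator measurableSet_Ioo _]
    have hint : IntegrableOn (fun s => γ * s ^ (γ-1)) (Ioo 0 v) := by
      have h1 : IntervalIntegrable (fun s : ℝ => s ^ (γ-1)) volume 0 v :=
        intervalIntegral.intervalIntegrable_rpow' (by linarith)
      have h2 : IntegrableOn (fun s : ℝ => s ^ (γ-1)) (Ioc 0 v) :=
        (intervalIntegrable_iff_integrableOn_Ioc_of_le hv.le).mp h1
      exact ((h2.mono_set Ioo_subset_Ioc_self).const_mul γ)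
    rw [← ofReal_integral_eq_lintegral_ofReal hint]
    · congr 1
      rw [← integral_Ioc_eq_integral_Ioo, ← intervalIntegral.integral_of_le hv.le,
        intervalIntegral.integral_const_mul, integral_rpow (Or.inl (by linarith))]
      rw [Real.zero_rpow (by linarith : γ - 1 + 1 ≠ 0)]
      rw [show γ - 1 + 1 = γ by ring, sub_zero, mul_comm, div_mul_cancel₀ _ (ne_of_gt hγ)]
    · filter_upwards [ae_restrict_mem measurableSet_Ioo] with s hs
      have : (0:ℝ) ≤ s ^ (γ-1) := Real.rpow_nonneg hs.1.le _
      positivity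
  -- swap
  have hswap : ∫⁻ v in Ioc 0 x, ∫⁻ s, f (v, s) ∂volume ∂ν
      = ∫⁻ s, ∫⁻ v in Ioc 0 x, f (v, s) ∂ν ∂volume := by
    exact lintegral_lintegral_swap (hfmeas.aemeasurable)
  have hleft : ∫⁻ v in Ioc 0 x, ENNReal.ofReal (v ^ γ) ∂ν
      = ∫⁻ v in Ioc 0 x, ∫⁻ s, f (v, s) ∂volume ∂ν := by
    refine setLIntegral_congr_fun measurableSet_Ioc ?_
    intro v hv
    exact (hinner v hv.1).symm
  -- inner integral in v
  have hright : ∀ s : ℝ, ∫⁻ v in Ioc 0 x, f (v, s) ∂ν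
      = ENNReal.ofReal (γ * s ^ (γ-1)) * ν (Ioc s x) * (Ioi (0:ℝ)).indicator 1 s := by
    intro s
    by_cases hs : 0 < s
    · have hset : ∫⁻ v in Ioc 0 x, f (v, s) ∂ν
          = ∫⁻ v in Ioc 0 x, Set.indicator (Ioi s) (fun _ => ENNReal.ofReal (γ * s ^ (γ-1))) v ∂ν := by
        refine lintegral_congr fun v => ?_
        simp only [hf, Set.indicator, mem_setOf_eq, mem_Ioi]
        split_ifs with h1 h2 h3 <;> first | rfl | (exfalso; tauto)
      rw [hset, lintegral_indicator measurableSet_Ioi _]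
      rw [setLIntegral_const, Measure.restrict_apply measurableSet_Ioi]
      have : Ioi s ∩ Ioc 0 x = Ioc s x := by
        ext v; simp only [mem_inter_iff, mem_Ioi, mem_Ioc]
        constructor
        · rintro ⟨h1, _, h3⟩; exact ⟨h1, h3⟩
        · rintro ⟨h1, h2⟩; exact ⟨h1, lt_trans hs h1, h2⟩
      rw [this, Set.indicator_of_mem (mem_Ioi.mpr hs)]
      simp
    · have hset : ∫⁻ v in Ioc 0 x, f (v, s) ∂ν = ∫⁻ _ in Ioc 0 x, (0:ENNReal) ∂ν := by
        refine lintegral_congr fun v => ?_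
        simp only [hf, Set.indicator, mem_setOf_eq]
        rw [if_neg]
        intro hc; exact hs hc.1
      rw [hset, lintegral_const, zero_mul, Set.indicator_of_notMem (by simpa using hs)]
      simp
  rw [hleft, hswap]
  have : ∀ s : ℝ, ∫⁻ v in Ioc 0 x, f (v, s) ∂ν
      = Set.indicator (Ioi (0:ℝ)) (fun s => ENNReal.ofReal (γ * s ^ (γ-1)) * ν (Ioc s x)) s := by
    intro s
    rw [hright s]
    by_cases hs : s ∈ Ioi (0:ℝ)
    · rw [Set.indicator_of_mem hs, Set.indicator_of_mem hs]; simp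
    · rw [Set.indicator_of_notMem hs, Set.indicator_of_notMem hs]; simp
  simp_rw [this]
  rw [← lintegral_indicator measurableSet_Ioi _]
lemma lint_rpow {γ : ℝ} (hγ : 0 < γ) {v : ℝ} (hv : 0 ≤ v) :
    ∫⁻ s in Ioc (0:ℝ) v, ENNReal.ofReal (γ * s ^ (γ-1)) = ENNReal.ofReal (v ^ γ) := by
  have hint : IntegrableOn (fun s => γ * s ^ (γ-1)) (Ioc 0 v) := by
    have h1 : IntervalIntegrable (fun s : ℝ => s ^ (γ-1)) volume 0 v :=
      intervalIntegral.intervalIntegrable_rpow' (by linarith)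
    exact (((intervalIntegrable_iff_integrableOn_Ioc_of_le hv).mp h1).const_mul γ)
  rw [← ofReal_integral_eq_lintegral_ofReal hint]
  · congr 1
    rw [← intervalIntegral.integral_of_le hv,
      intervalIntegral.integral_const_mul, integral_rpow (Or.inl (by linarith))]
    rw [Real.zero_rpow (by linarith : γ - 1 + 1 ≠ 0)]
    rw [show γ - 1 + 1 = γ by ring, sub_zero, mul_comm, div_mul_cancel₀ _ (ne_of_gt hγ)]
  · filter_upwards [ae_restrict_mem measurableSet_Ioc] with s hs
    have : (0:ℝ) ≤ s ^ (γ-1) := Real.rpow_nonneg hs.1.le _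
    positivity

lemma lint_inv {A x c : ℝ} (hA : 0 < A) (hx : A ≤ x) (hc : 0 ≤ c) :
    ∫⁻ s in Ioc A x, ENNReal.ofReal (c * s⁻¹)
      = ENNReal.ofReal (c * (Real.log x - Real.log A)) := by
  have hint : IntegrableOn (fun s : ℝ => c * s⁻¹) (Ioc A x) := by
    have h1 : IntervalIntegrable (fun s : ℝ => s⁻¹) volume A x :=
      intervalIntegral.intervalIntegrable_inv (f := fun s => s) (fun t ht => by
        rw [uIcc_of_le hx] at ht; exact ne_of_gt (lt_of_lt_of_le hA ht.1)) continuousOn_id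
    exact (((intervalIntegrable_iff_integrableOn_Ioc_of_le hx).mp h1).const_mul c)
  rw [← ofReal_integral_eq_lintegral_ofReal hint]
  · congr 1
    rw [← intervalIntegral.integral_of_le hx, intervalIntegral.integral_const_mul,
      integral_inv_of_pos hA (lt_of_lt_of_le hA hx), Real.log_div (ne_of_gt (lt_of_lt_of_le hA hx)) (ne_of_gt hA)]
  · filter_upwards [ae_restrict_mem measurableSet_Ioc] with s hs
    have hs0 : 0 < s := lt_of_lt_of_le hA hs.1.le
    positivity

lemma m_upper (ν : Measure ℝ) [IsProbabilityMeasure ν] {γ δ c A x : ℝ}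
    (hγ : 0 < γ) (hA : 1 ≤ A) (hx : A ≤ x) (hδ : 0 ≤ δ) (hc : 0 < c)
    (htail : ∀ s, A ≤ s → ν (Ioi s) ≤ ENNReal.ofReal ((1+δ)*c*s^(-γ))) :
    ∫⁻ v in Ioc 0 x, ENNReal.ofReal (v ^ γ) ∂ν
      ≤ ENNReal.ofReal (A^γ + γ*(1+δ)*c*(Real.log x - Real.log A)) := by
  have hA0 : (0:ℝ) < A := lt_of_lt_of_le one_pos hA
  have hx0 : (0:ℝ) < x := lt_of_lt_of_le hA0 hx
  rw [m_repr ν hγ x]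
  have hsplit1 : Ioi (0:ℝ) = Ioc 0 A ∪ Ioi A := (Ioc_union_Ioi_eq_Ioi hA0.le).symm
  have hsplit2 : Ioi A = Ioc A x ∪ Ioi x := (Ioc_union_Ioi_eq_Ioi hx).symm
  rw [hsplit1, lintegral_union measurableSet_Ioi Ioc_disjoint_Ioi_same,
    hsplit2, lintegral_union measurableSet_Ioi Ioc_disjoint_Ioi_same]
  have h3 : ∫⁻ s in Ioi x, ENNReal.ofReal (γ * s ^ (γ-1)) * ν (Ioc s x) = 0 := by
    rw [← lintegral_zero (μ := volume.restrict (Ioi x))]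
    refine setLIntegral_congr_fun measurableSet_Ioi ?_
    intro s hs
    dsimp only
    rw [Ioc_eq_empty (not_lt.mpr (le_of_lt hs)), measure_empty, mul_zero]
  rw [h3, add_zero]
  have h1 : ∫⁻ s in Ioc 0 A, ENNReal.ofReal (γ * s ^ (γ-1)) * ν (Ioc s x)
      ≤ ENNReal.ofReal (A ^ γ) := by
    calc ∫⁻ s in Ioc 0 A, ENNReal.ofReal (γ * s ^ (γ-1)) * ν (Ioc s x)
        ≤ ∫⁻ s in Ioc 0 A, ENNReal.ofReal (γ * s ^ (γ-1)) := by
          refine lintegral_mono fun s => ?_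
          calc ENNReal.ofReal (γ * s ^ (γ-1)) * ν (Ioc s x)
              ≤ ENNReal.ofReal (γ * s ^ (γ-1)) * 1 :=
                mul_le_mul_right prob_le_one _
            _ = ENNReal.ofReal (γ * s ^ (γ-1)) := mul_one _
      _ = ENNReal.ofReal (A ^ γ) := lint_rpow hγ hA0.le
  have h2 : ∫⁻ s in Ioc A x, ENNReal.ofReal (γ * s ^ (γ-1)) * ν (Ioc s x)
      ≤ ENNReal.ofReal (γ*(1+δ)*c*(Real.log x - Real.log A)) := by
    calc ∫⁻ s in Ioc A x, ENNReal.ofReal (γ * s ^ (γ-1)) * ν (Ioc s x)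
        ≤ ∫⁻ s in Ioc A x, ENNReal.ofReal ((γ*(1+δ)*c) * s⁻¹) := by
          refine setLIntegral_mono ((measurable_const.mul (measurable_id.inv)).ennreal_ofReal) ?_
          intro s hs
          have hs0 : 0 < s := lt_of_lt_of_le hA0 hs.1.le
          have hb : ν (Ioc s x) ≤ ENNReal.ofReal ((1+δ)*c*s^(-γ)) :=
            le_trans (measure_mono Ioc_subset_Ioi_self) (htail s hs.1.le)
          calc ENNReal.ofReal (γ * s ^ (γ-1)) * ν (Ioc s x)
              ≤ ENNReal.ofReal (γ * s ^ (γ-1)) * ENNReal.ofReal ((1+δ)*c*s^(-γ)) :=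
                mul_le_mul_right hb _
            _ = ENNReal.ofReal ((γ * s ^ (γ-1)) * ((1+δ)*c*s^(-γ))) :=
                (ENNReal.ofReal_mul (by
                  have : (0:ℝ) ≤ s ^ (γ-1) := Real.rpow_nonneg hs0.le _
                  positivity)).symm
            _ = ENNReal.ofReal ((γ*(1+δ)*c) * s⁻¹) := by
                rw [show γ * s ^ (γ-1) * ((1+δ)*c*s^(-γ)) = γ*(1+δ)*c*(s ^ (γ-1) * s^(-γ)) by ring,
                  ← Real.rpow_add hs0, show γ - 1 + -γ = (-1:ℝ) by ring, Real.rpow_neg_one]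
      _ = ENNReal.ofReal (γ*(1+δ)*c*(Real.log x - Real.log A)) := by
          rw [lint_inv hA0 hx (by positivity)]
  calc (∫⁻ s in Ioc 0 A, ENNReal.ofReal (γ * s ^ (γ-1)) * ν (Ioc s x))
        + ∫⁻ s in Ioc A x, ENNReal.ofReal (γ * s ^ (γ-1)) * ν (Ioc s x)
      ≤ ENNReal.ofReal (A ^ γ) + ENNReal.ofReal (γ*(1+δ)*c*(Real.log x - Real.log A)) :=
        add_le_add h1 h2
    _ = ENNReal.ofReal (A^γ + γ*(1+δ)*c*(Real.log x - Real.log A)) := by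
        have hlog : Real.log A ≤ Real.log x := Real.log_le_log hA0 hx
        rw [← ENNReal.ofReal_add (by positivity) (mul_nonneg (by positivity) (by linarith))]

lemma ofReal_integral_le_lintegral_ofReal' {μ : Measure ℝ} {f : ℝ → ℝ} (hf : Integrable f μ) :
    ENNReal.ofReal (∫ x, f x ∂μ) ≤ ∫⁻ x, ENNReal.ofReal (f x) ∂μ := by
  have hmax : Integrable (fun x => max (f x) 0) μ := hf.pos_part
  have h1 : ∫ x, f x ∂μ ≤ ∫ x, max (f x) 0 ∂μ :=
    integral_mono hf hmax (fun x => le_max_left _ _)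
  calc ENNReal.ofReal (∫ x, f x ∂μ) ≤ ENNReal.ofReal (∫ x, max (f x) 0 ∂μ) :=
        ENNReal.ofReal_le_ofReal h1
    _ = ∫⁻ x, ENNReal.ofReal (max (f x) 0) ∂μ :=
        ofReal_integral_eq_lintegral_ofReal hmax
          (Filter.Eventually.of_forall fun x => le_max_right _ _)
    _ = ∫⁻ x, ENNReal.ofReal (f x) ∂μ := by
        refine lintegral_congr fun x => ?_
        rcases le_total (f x) 0 with h | h
        · rw [max_eq_right h, ENNReal.ofReal_zero, ENNReal.ofReal_of_nonpos h]
        · rw [max_eq_left h]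

lemma m_lower (ν : Measure ℝ) [IsProbabilityMeasure ν] {γ δ c A x : ℝ}
    (hγ : 0 < γ) (hA : 1 ≤ A) (hx : A ≤ x) (hδ : 0 ≤ δ) (hc : 0 < c)
    (htlow : ∀ s, A ≤ s → ENNReal.ofReal ((1-δ)*c*s^(-γ)) ≤ ν (Ioi s))
    (htup : ∀ s, A ≤ s → ν (Ioi s) ≤ ENNReal.ofReal ((1+δ)*c*s^(-γ))) :
    ENNReal.ofReal (γ*(1-δ)*c*(Real.log x - Real.log A) - (1+δ)*c)
      ≤ ∫⁻ v in Ioc 0 x, ENNReal.ofReal (v ^ γ) ∂ν := by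
  have hA0 : (0:ℝ) < A := lt_of_lt_of_le one_pos hA
  have hx0 : (0:ℝ) < x := lt_of_lt_of_le hA0 hx
  rw [m_repr ν hγ x]
  set g : ℝ → ℝ := fun s => γ*(1-δ)*c*s⁻¹ - ((1+δ)*c*x^(-γ))*(γ*s^(γ-1)) with hg
  have step1 : ∫⁻ s in Ioc A x, ENNReal.ofReal (g s)
      ≤ ∫⁻ s in Ioi (0:ℝ), ENNReal.ofReal (γ * s ^ (γ-1)) * ν (Ioc s x) := by
    refine le_trans ?_ (lintegral_mono_set (s := Ioc A x) (t := Ioi 0) (Ioc_subset_Ioi_self.trans (Ioi_subset_Ioi hA0.le)))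
    have hmeas2 : Measurable fun s : ℝ => ν (Ioc s x) :=
      Antitone.measurable (fun s t hst => measure_mono (Ioc_subset_Ioc_left hst))
    refine setLIntegral_mono ((measurable_const.mul
      (measurable_id.pow_const _)).ennreal_ofReal.mul hmeas2) ?_
    intro s hs
    have hs0 : 0 < s := lt_of_lt_of_le hA0 hs.1.le
    have hνeq : ν (Ioc s x) = ν (Ioi s) - ν (Ioi x) := by
      rw [← Ioi_diff_Ioi]
      exact measure_diff (Ioi_subset_Ioi hs.2) measurableSet_Ioi.nullMeasurableSet
        (measure_ne_top ν _)
    have hν : ENNReal.ofReal ((1-δ)*c*s^(-γ) - (1+δ)*c*x^(-γ)) ≤ ν (Ioc s x) := by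
      rw [hνeq, ENNReal.ofReal_sub _ (by positivity)]
      exact tsub_le_tsub (htlow s hs.1.le) (htup x hx)
    have hrp : (0:ℝ) ≤ s ^ (γ-1) := Real.rpow_nonneg hs0.le _
    calc ENNReal.ofReal (g s)
        = ENNReal.ofReal ((γ * s^(γ-1)) * ((1-δ)*c*s^(-γ) - (1+δ)*c*x^(-γ))) := by
          congr 1
          have h1 : s ^ (γ-1) * s^(-γ) = s⁻¹ := by
            rw [← Real.rpow_add hs0, show γ - 1 + -γ = (-1:ℝ) by ring, Real.rpow_neg_one]
          simp only [hg]
          rw [← h1]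
          ring
      _ = ENNReal.ofReal (γ * s^(γ-1)) * ENNReal.ofReal ((1-δ)*c*s^(-γ) - (1+δ)*c*x^(-γ)) :=
          ENNReal.ofReal_mul (by positivity)
      _ ≤ ENNReal.ofReal (γ * s ^ (γ-1)) * ν (Ioc s x) := mul_le_mul_right hν _
  refine le_trans ?_ step1
  have hint1 : IntervalIntegrable (fun s : ℝ => γ*(1-δ)*c*s⁻¹) volume A x := by
    apply IntervalIntegrable.const_mul
    exact intervalIntegral.intervalIntegrable_inv (f := fun s => s) (fun t ht => by
      rw [uIcc_of_le hx] at ht; exact ne_of_gt (lt_of_lt_of_le hA0 ht.1)) continuousOn_id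
  have hint2 : IntervalIntegrable (fun s : ℝ => ((1+δ)*c*x^(-γ))*(γ*s^(γ-1))) volume A x := by
    apply IntervalIntegrable.const_mul
    exact (intervalIntegral.intervalIntegrable_rpow' (by linarith)).const_mul γ
  have hgint : IntegrableOn g (Ioc A x) :=
    (intervalIntegrable_iff_integrableOn_Ioc_of_le hx).mp (hint1.sub hint2)
  refine le_trans ?_ (ofReal_integral_le_lintegral_ofReal' hgint)
  apply ENNReal.ofReal_le_ofReal
  have hIg : ∫ s in Ioc A x, g s
      = γ*(1-δ)*c*(Real.log x - Real.log A) - ((1+δ)*c*x^(-γ))*(x^γ - A^γ) := by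
    rw [← intervalIntegral.integral_of_le hx, hg,
      intervalIntegral.integral_sub hint1 hint2,
      intervalIntegral.integral_const_mul, intervalIntegral.integral_const_mul,
      intervalIntegral.integral_const_mul,
      integral_inv_of_pos hA0 hx0, integral_rpow (Or.inl (by linarith : (-1:ℝ) < γ - 1)),
      Real.log_div (ne_of_gt hx0) (ne_of_gt hA0)]
    rw [show γ - 1 + 1 = γ by ring]
    have hγ0 : γ ≠ 0 := ne_of_gt hγ
    field_simp
  rw [hIg]
  have h1 : x^(-γ) * x^γ = 1 := by
    rw [← Real.rpow_add hx0]; simp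
  have h2 : (0:ℝ) ≤ x^(-γ) * A^γ := by positivity
  have h3 : (0:ℝ) ≤ (1+δ)*c := by positivity
  nlinarith [h1, h2, h3]

lemma tail_bounds (ν : Measure ℝ) [IsFiniteMeasure ν] {γ c : ℝ} (hγ : 0 < γ) (hc : 0 < c)
    (ht : Tendsto (fun v : ℝ => (ν (Ioi v)).toReal / (c * v ^ (-γ))) atTop (nhds 1))
    {δ : ℝ} (hδ : 0 < δ) :
    ∃ A : ℝ, 1 ≤ A ∧ ∀ u, A ≤ u →
      ENNReal.ofReal ((1-δ)*c*u^(-γ)) ≤ ν (Ioi u) ∧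
      ν (Ioi u) ≤ ENNReal.ofReal ((1+δ)*c*u^(-γ)) := by
  have hev : ∀ᶠ u in atTop, (ν (Ioi u)).toReal / (c * u ^ (-γ)) ∈ Icc (1-δ) (1+δ) :=
    ht.eventually (eventually_of_mem (Icc_mem_nhds (by linarith) (by linarith))
      (fun x hx => hx))
  obtain ⟨A0, hA0⟩ := eventually_atTop.mp hev
  refine ⟨max A0 1, le_max_right _ _, fun u hu => ?_⟩
  have hu1 : (1:ℝ) ≤ u := le_trans (le_max_right _ _) hu
  have hu0 : (0:ℝ) < u := lt_of_lt_of_le one_pos hu1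
  have hd : (0:ℝ) < c * u ^ (-γ) := by
    have := Real.rpow_pos_of_pos hu0 (-γ); positivity
  obtain ⟨h1, h2⟩ := hA0 u (le_trans (le_max_left _ _) hu)
  constructor
  · rw [ENNReal.ofReal_le_iff_le_toReal (measure_ne_top ν _)]
    calc (1-δ)*c*u^(-γ) = (1-δ) * (c * u^(-γ)) := by ring
      _ ≤ (ν (Ioi u)).toReal := by
          have := (le_div_iff₀ hd).mp h1
          linarith
  · rw [ENNReal.le_ofReal_iff_toReal_le (measure_ne_top ν _) (by positivity)]
    calc (ν (Ioi u)).toReal ≤ (1+δ) * (c * u^(-γ)) := by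
          have := (div_le_iff₀ hd).mp h2
          linarith
      _ = (1+δ)*c*u^(-γ) := by ring

open ProbabilityTheory in
lemma key_id {Ω : Type*} [MeasurableSpace Ω] (μ : Measure Ω) [IsProbabilityMeasure μ]
    (V W : Ω → ℝ) (hVmeas : Measurable V) (hWmeas : Measurable W)
    (hWpos : ∀ ω, 0 ≤ W ω) (hindep : IndepFun V W μ) {z : ℝ} (hz : 0 < z) :
    μ {ω | V ω * W ω > z} = ∫⁻ v in Ioi (0:ℝ), (μ.map W) (Ioi (z/v)) ∂(μ.map V) := by
  have hmap : μ.map (fun ω => (V ω, W ω)) = (μ.map V).prod (μ.map W) :=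
    (indepFun_iff_map_prod_eq_prod_map_map hVmeas.aemeasurable hWmeas.aemeasurable).mp hindep
  have hs : MeasurableSet {p : ℝ × ℝ | p.1 * p.2 > z} :=
    measurableSet_lt measurable_const (measurable_fst.mul measurable_snd)
  have h1 : μ {ω | V ω * W ω > z}
      = ((μ.map V).prod (μ.map W)) {p : ℝ × ℝ | p.1 * p.2 > z} := by
    rw [← hmap, Measure.map_apply (hVmeas.prodMk hWmeas) hs]
    rfl
  rw [h1, Measure.prod_apply hs]
  have hW0 : (μ.map W) (Iio 0) = 0 := by
    rw [Measure.map_apply hWmeas measurableSet_Iio]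
    have : W ⁻¹' Iio 0 = ∅ := by
      ext ω; simp [Set.mem_preimage, not_lt.mpr (hWpos ω)]
    simp [this]
  rw [← lintegral_add_compl (fun v => (μ.map W) (Prod.mk v ⁻¹' {p : ℝ × ℝ | p.1 * p.2 > z}))
    (measurableSet_Ioi (a := (0:ℝ)))]
  have h2 : ∫⁻ v in (Ioi (0:ℝ))ᶜ, (μ.map W) (Prod.mk v ⁻¹' {p : ℝ × ℝ | p.1 * p.2 > z}) ∂(μ.map V) = 0 := by
    have : ∀ v ∈ (Ioi (0:ℝ))ᶜ, (μ.map W) (Prod.mk v ⁻¹' {p : ℝ × ℝ | p.1 * p.2 > z}) = 0 := by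
      intro v hv
      have hv' : v ≤ 0 := by simpa using hv
      refine measure_mono_null ?_ hW0
      intro w hw
      simp only [Set.mem_preimage, Set.mem_setOf_eq] at hw
      by_contra hwc
      have hw0 : 0 ≤ w := by simpa using hwc
      nlinarith
    calc ∫⁻ v in (Ioi (0:ℝ))ᶜ, (μ.map W) (Prod.mk v ⁻¹' {p : ℝ × ℝ | p.1 * p.2 > z}) ∂(μ.map V)
        = ∫⁻ _ in (Ioi (0:ℝ))ᶜ, 0 ∂(μ.map V) := setLIntegral_congr_fun measurableSet_Ioi.compl
          this
      _ = 0 := lintegral_zero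
  rw [h2, add_zero]
  refine setLIntegral_congr_fun measurableSet_Ioi ?_
  intro v hv
  dsimp only
  congr 1
  ext w
  simp only [Set.mem_preimage, Set.mem_setOf_eq, Set.mem_Ioi]
  rw [mem_Ioi] at hv
  constructor
  · intro h; exact (div_lt_iff₀ hv).mpr (by linarith [mul_comm v w])
  · intro h; have := (div_lt_iff₀ hv).mp h; nlinarith


set_option maxHeartbeats 2000000 in
/-- if `V, W ≥ 0` are independent with `P(V > v) ~ c_V v^{-γ}` and
`P(W > w) ~ c_W w^{-γ}` for the same `γ ∈ (0,2)`, then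
`P(V·W > z) ~ γ c_V c_W log(z) z^{-γ}` as `z → ∞`. -/
theorem stmt7 {Ω : Type*} [MeasurableSpace Ω] (μ : Measure Ω) [IsProbabilityMeasure μ]
    (V W : Ω → ℝ) (hVmeas : Measurable V) (hWmeas : Measurable W)
    (hVpos : ∀ ω, 0 ≤ V ω) (hWpos : ∀ ω, 0 ≤ W ω)
    (hindep : IndepFun V W μ)
    (γ cV cW : ℝ) (hγ : γ ∈ Set.Ioo (0:ℝ) 2) (hcV : 0 < cV) (hcW : 0 < cW)
    (htailV : Tendsto (fun v : ℝ => (μ {ω | V ω > v}).toReal / (cV * v ^ (-γ)))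
      atTop (nhds 1))
    (htailW : Tendsto (fun w : ℝ => (μ {ω | W ω > w}).toReal / (cW * w ^ (-γ)))
      atTop (nhds 1)) :
    Tendsto (fun z : ℝ =>
        (μ {ω | V ω * W ω > z}).toReal / (γ * cV * cW * Real.log z * z ^ (-γ)))
      atTop (nhds 1) := by
  obtain ⟨hγ0, hγ2⟩ := hγ
  have hνprob : IsProbabilityMeasure (μ.map V) := Measure.isProbabilityMeasure_map hVmeas.aemeasurable
  have hρprob : IsProbabilityMeasure (μ.map W) := Measure.isProbabilityMeasure_map hWmeas.aemeasurable
  set ν := μ.map V with hνdef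
  set ρ := μ.map W with hρdef
  have hνIoi : ∀ v : ℝ, ν (Ioi v) = μ {ω | V ω > v} := fun v => by
    rw [hνdef, Measure.map_apply hVmeas measurableSet_Ioi]; rfl
  have hρIoi : ∀ w : ℝ, ρ (Ioi w) = μ {ω | W ω > w} := fun w => by
    rw [hρdef, Measure.map_apply hWmeas measurableSet_Ioi]; rfl
  have htailV' : Tendsto (fun v : ℝ => (ν (Ioi v)).toReal / (cV * v ^ (-γ))) atTop (nhds 1) := by
    simp_rw [hνIoi]; exact htailV
  have htailW' : Tendsto (fun w : ℝ => (ρ (Ioi w)).toReal / (cW * w ^ (-γ))) atTop (nhds 1) := by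
    simp_rw [hρIoi]; exact htailW
  have hkey : ∀ z : ℝ, 0 < z →
      μ {ω | V ω * W ω > z} = ∫⁻ v in Ioi (0:ℝ), ρ (Ioi (z/v)) ∂ν :=
    fun z hz => key_id μ V W hVmeas hWmeas hWpos hindep hz
  apply sq_aux
  intro δ hδ0 hδ1
  obtain ⟨AV, hAV1, hAV⟩ := tail_bounds ν hγ0 hcV htailV' hδ0
  obtain ⟨AW, hAW1, hAW⟩ := tail_bounds ρ hγ0 hcW htailW' hδ0
  set A : ℝ := max AV AW with hAdef
  have hA1 : 1 ≤ A := le_trans hAV1 (le_max_left _ _)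
  have hA0 : (0:ℝ) < A := lt_of_lt_of_le one_pos hA1
  have hbV : ∀ u, A ≤ u →
      ENNReal.ofReal ((1-δ)*cV*u^(-γ)) ≤ ν (Ioi u) ∧
      ν (Ioi u) ≤ ENNReal.ofReal ((1+δ)*cV*u^(-γ)) :=
    fun u hu => hAV u (le_trans (le_max_left _ _) hu)
  have hbW : ∀ u, A ≤ u →
      ENNReal.ofReal ((1-δ)*cW*u^(-γ)) ≤ ρ (Ioi u) ∧
      ρ (Ioi u) ≤ ENNReal.ofReal ((1+δ)*cW*u^(-γ)) :=
    fun u hu => hAW u (le_trans (le_max_right _ _) hu)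
  set CU : ℝ := ((1+δ)*cW*A^γ + (1+δ)*cV*A^γ)/(γ*cV*cW) - (1+δ)*(1+δ)*(2*Real.log A) with hCU
  set CL : ℝ := -((1-δ)*(1-δ)*(2*Real.log A)) - (1-δ)*(1+δ)/γ with hCL
  refine ⟨fun z => (1-δ)*(1-δ) + CL / Real.log z, fun z => (1+δ)*(1+δ) + CU / Real.log z,
    ?_, ?_, ?_⟩
  · have h0 : Tendsto (fun z : ℝ => CL / Real.log z) atTop (nhds 0) :=
      Tendsto.div_atTop tendsto_const_nhds Real.tendsto_log_atTop
    simpa using tendsto_const_nhds.add h0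
  · have h0 : Tendsto (fun z : ℝ => CU / Real.log z) atTop (nhds 0) :=
      Tendsto.div_atTop tendsto_const_nhds Real.tendsto_log_atTop
    simpa using tendsto_const_nhds.add h0
  -- the eventual two-sided bound
  filter_upwards [eventually_ge_atTop (max (A*A) 2)] with z hz
  have hz2 : (2:ℝ) ≤ z := le_trans (le_max_right _ _) hz
  have hzA2 : A*A ≤ z := le_trans (le_max_left _ _) hz
  have hz1 : (1:ℝ) < z := by linarith
  have hz0 : (0:ℝ) < z := by linarith
  have hlogz : 0 < Real.log z := Real.log_pos hz1
  have hzA : A ≤ z/A := (le_div_iff₀ hA0).mpr hzA2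
  have hzA0 : (0:ℝ) < z/A := lt_of_lt_of_le hA0 hzA
  have hlog2A : 2*Real.log A ≤ Real.log z := by
    have h2 : Real.log (A*A) ≤ Real.log z := Real.log_le_log (by positivity) hzA2
    rw [Real.log_mul (ne_of_gt hA0) (ne_of_gt hA0)] at h2
    linarith
  have hlogdiv : Real.log (z/A) - Real.log A = Real.log z - 2*Real.log A := by
    rw [Real.log_div (ne_of_gt hz0) (ne_of_gt hA0)]; ring
  have hzγ : (0:ℝ) < z^(-γ) := Real.rpow_pos_of_pos hz0 _
  have hAγ : (0:ℝ) ≤ A^γ := Real.rpow_nonneg hA0.le _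
  set D : ℝ := γ * cV * cW * Real.log z * z ^ (-γ) with hD
  have hD0 : (0:ℝ) < D := by rw [hD]; positivity
  set F : ℝ≥0∞ := ∫⁻ v in Ioi (0:ℝ), ρ (Ioi (z/v)) ∂ν with hF
  have hFle1 : F ≤ 1 := by
    calc F ≤ ∫⁻ _ in Ioi (0:ℝ), 1 ∂ν := setLIntegral_mono measurable_const
            (fun v _ => prob_le_one)
      _ = ν (Ioi 0) := setLIntegral_one _
      _ ≤ 1 := prob_le_one
  have hFtop : F ≠ ⊤ := ne_top_of_le_ne_top ENNReal.one_ne_top hFle1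
  have hmmeas : Measurable fun v : ℝ => ENNReal.ofReal (v ^ γ) :=
    (measurable_id.pow_const _).ennreal_ofReal
  set m : ℝ≥0∞ := ∫⁻ v in Ioc (0:ℝ) (z/A), ENNReal.ofReal (v ^ γ) ∂ν with hm
  have hrpow_div : ∀ v : ℝ, 0 < v → (z/v)^(-γ) = z^(-γ) * v^γ := by
    intro v hv
    rw [Real.div_rpow hz0.le hv.le, div_eq_mul_inv, Real.rpow_neg hv.le, inv_inv]
  -- upper bound on F
  have hFup : F ≤ ENNReal.ofReal ((1+δ)*cW*z^(-γ) * (A^γ + γ*(1+δ)*cV*(Real.log z - 2*Real.log A))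
      + (1+δ)*cV*A^γ*z^(-γ)) := by
    have hsplit : F = (∫⁻ v in Ioc (0:ℝ) (z/A), ρ (Ioi (z/v)) ∂ν)
        + ∫⁻ v in Ioi (z/A), ρ (Ioi (z/v)) ∂ν := by
      rw [hF, show Ioi (0:ℝ) = Ioc 0 (z/A) ∪ Ioi (z/A) from (Ioc_union_Ioi_eq_Ioi hzA0.le).symm,
        lintegral_union measurableSet_Ioi Ioc_disjoint_Ioi_same]
    have h1 : ∫⁻ v in Ioc (0:ℝ) (z/A), ρ (Ioi (z/v)) ∂ν
        ≤ ENNReal.ofReal ((1+δ)*cW*z^(-γ)) * m := by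
      rw [hm, ← lintegral_const_mul _ hmmeas]
      refine setLIntegral_mono (measurable_const.mul hmmeas) ?_
      intro v hv
      have hv0 : 0 < v := hv.1
      have hAzv : A ≤ z/v := (le_div_iff₀ hv0).mpr (by
        have := (le_div_iff₀ hA0).mp hv.2
        nlinarith)
      calc ρ (Ioi (z/v)) ≤ ENNReal.ofReal ((1+δ)*cW*(z/v)^(-γ)) := (hbW _ hAzv).2
        _ = ENNReal.ofReal ((1+δ)*cW*z^(-γ)) * ENNReal.ofReal (v^γ) := by
            rw [← ENNReal.ofReal_mul (by positivity), hrpow_div v hv0]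
            ring_nf
    have h2 : ∫⁻ v in Ioi (z/A), ρ (Ioi (z/v)) ∂ν ≤ ENNReal.ofReal ((1+δ)*cV*A^γ*z^(-γ)) := by
      calc ∫⁻ v in Ioi (z/A), ρ (Ioi (z/v)) ∂ν
          ≤ ∫⁻ _ in Ioi (z/A), 1 ∂ν := setLIntegral_mono measurable_const
            (fun v _ => prob_le_one)
        _ = ν (Ioi (z/A)) := setLIntegral_one _
        _ ≤ ENNReal.ofReal ((1+δ)*cV*(z/A)^(-γ)) := (hbV _ hzA).2
        _ = ENNReal.ofReal ((1+δ)*cV*A^γ*z^(-γ)) := by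
            rw [hrpow_div A hA0]; ring_nf
    have h3 : m ≤ ENNReal.ofReal (A^γ + γ*(1+δ)*cV*(Real.log z - 2*Real.log A)) := by
      rw [← hlogdiv]
      exact m_upper ν hγ0 hA1 hzA hδ0.le hcV (fun s hs => (hbV s hs).2)
    calc F = (∫⁻ v in Ioc (0:ℝ) (z/A), ρ (Ioi (z/v)) ∂ν)
          + ∫⁻ v in Ioi (z/A), ρ (Ioi (z/v)) ∂ν := hsplit
      _ ≤ ENNReal.ofReal ((1+δ)*cW*z^(-γ)) * ENNReal.ofReal (A^γ + γ*(1+δ)*cV*(Real.log z - 2*Real.log A))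
          + ENNReal.ofReal ((1+δ)*cV*A^γ*z^(-γ)) :=
          add_le_add (le_trans h1 (mul_le_mul_right h3 _)) h2
      _ = ENNReal.ofReal ((1+δ)*cW*z^(-γ) * (A^γ + γ*(1+δ)*cV*(Real.log z - 2*Real.log A))
          + (1+δ)*cV*A^γ*z^(-γ)) := by
          have hbnn : (0:ℝ) ≤ γ*(1+δ)*cV*(Real.log z - 2*Real.log A) :=
            mul_nonneg (by positivity) (by linarith)
          have hsum : (0:ℝ) ≤ A^γ + γ*(1+δ)*cV*(Real.log z - 2*Real.log A) := by linarith
          rw [← ENNReal.ofReal_mul (by positivity), ← ENNReal.ofReal_add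
            (mul_nonneg (by positivity) hsum) (by positivity)]
  -- lower bound on F
  have hFlow : ENNReal.ofReal ((1-δ)*cW*z^(-γ) *
      (γ*(1-δ)*cV*(Real.log z - 2*Real.log A) - (1+δ)*cV)) ≤ F := by
    have h1 : ENNReal.ofReal ((1-δ)*cW*z^(-γ)) * m ≤ ∫⁻ v in Ioc (0:ℝ) (z/A), ρ (Ioi (z/v)) ∂ν := by
      rw [hm, ← lintegral_const_mul _ hmmeas]
      have hρmeas : Measurable fun v : ℝ => ρ (Ioi (z/v)) := by
        have h : Antitone fun u : ℝ => ρ (Ioi u) :=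
          fun u u' hu => measure_mono (Ioi_subset_Ioi hu)
        exact (Antitone.measurable h).comp (measurable_const.div measurable_id)
      refine setLIntegral_mono hρmeas ?_
      intro v hv
      have hv0 : 0 < v := hv.1
      have hAzv : A ≤ z/v := (le_div_iff₀ hv0).mpr (by
        have := (le_div_iff₀ hA0).mp hv.2
        nlinarith)
      calc ENNReal.ofReal ((1-δ)*cW*z^(-γ)) * ENNReal.ofReal (v^γ)
          = ENNReal.ofReal ((1-δ)*cW*(z/v)^(-γ)) := by
            rw [← ENNReal.ofReal_mul (mul_nonneg (mul_nonneg (by linarith : (0:ℝ) ≤ 1-δ) hcW.le) hzγ.le), hrpow_div v hv0]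
            ring_nf
        _ ≤ ρ (Ioi (z/v)) := (hbW _ hAzv).1
    have h3 : ENNReal.ofReal (γ*(1-δ)*cV*(Real.log z - 2*Real.log A) - (1+δ)*cV) ≤ m := by
      rw [← hlogdiv]
      exact m_lower ν hγ0 hA1 hzA hδ0.le hcV (fun s hs => (hbV s hs).1)
        (fun s hs => (hbV s hs).2)
    calc ENNReal.ofReal ((1-δ)*cW*z^(-γ) *
          (γ*(1-δ)*cV*(Real.log z - 2*Real.log A) - (1+δ)*cV))
        = ENNReal.ofReal ((1-δ)*cW*z^(-γ)) *
          ENNReal.ofReal (γ*(1-δ)*cV*(Real.log z - 2*Real.log A) - (1+δ)*cV) :=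
          ENNReal.ofReal_mul (mul_nonneg (mul_nonneg (by linarith : (0:ℝ) ≤ 1-δ) hcW.le) hzγ.le)
      _ ≤ ENNReal.ofReal ((1-δ)*cW*z^(-γ)) * m := mul_le_mul_right h3 _
      _ ≤ ∫⁻ v in Ioc (0:ℝ) (z/A), ρ (Ioi (z/v)) ∂ν := h1
      _ ≤ F := lintegral_mono_set Ioc_subset_Ioi_self
  -- convert to real bounds
  have hkz : (μ {ω | V ω * W ω > z}).toReal = F.toReal := by rw [hkey z hz0, hF]
  constructor
  · -- lower bound
    rw [hkz]
    have hC0 : (1-δ)*cW*z^(-γ) * (γ*(1-δ)*cV*(Real.log z - 2*Real.log A) - (1+δ)*cV)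
        ≤ F.toReal := (ENNReal.ofReal_le_iff_le_toReal hFtop).mp hFlow
    calc (1-δ)*(1-δ) + CL / Real.log z
        = ((1-δ)*cW*z^(-γ) * (γ*(1-δ)*cV*(Real.log z - 2*Real.log A) - (1+δ)*cV)) / D := by
          rw [hCL, hD]
          generalize z^(-γ) = t at hzγ ⊢
          generalize Real.log z = Lz at hlogz ⊢
          have h1 : Lz ≠ 0 := ne_of_gt hlogz
          have h2 : t ≠ 0 := ne_of_gt hzγ
          field_simp
          ring
      _ ≤ F.toReal / D := by gcongr
  · -- upper bound
    rw [hkz]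
    have hC1nn : 0 ≤ (1+δ)*cW*z^(-γ) * (A^γ + γ*(1+δ)*cV*(Real.log z - 2*Real.log A))
        + (1+δ)*cV*A^γ*z^(-γ) := by
      have hb : (0:ℝ) ≤ γ*(1+δ)*cV*(Real.log z - 2*Real.log A) :=
        mul_nonneg (by positivity) (by linarith)
      have h1 : (0:ℝ) ≤ (1+δ)*cW*z^(-γ) :=
        mul_nonneg (mul_nonneg (by linarith) hcW.le) hzγ.le
      have hsum : (0:ℝ) ≤ A^γ + γ*(1+δ)*cV*(Real.log z - 2*Real.log A) := by linarith
      have h2 : (0:ℝ) ≤ (1+δ)*cV*A^γ*z^(-γ) :=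
        mul_nonneg (mul_nonneg (mul_nonneg (by linarith) hcV.le) hAγ) hzγ.le
      exact add_nonneg (mul_nonneg h1 hsum) h2
    have hC1 : F.toReal ≤ (1+δ)*cW*z^(-γ) * (A^γ + γ*(1+δ)*cV*(Real.log z - 2*Real.log A))
        + (1+δ)*cV*A^γ*z^(-γ) := ENNReal.toReal_le_of_le_ofReal hC1nn hFup
    calc F.toReal / D
        ≤ ((1+δ)*cW*z^(-γ) * (A^γ + γ*(1+δ)*cV*(Real.log z - 2*Real.log A))
          + (1+δ)*cV*A^γ*z^(-γ)) / D := by gcongr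
      _ = (1+δ)*(1+δ) + CU / Real.log z := by
          rw [hCU, hD]
          generalize z^(-γ) = t at hzγ ⊢
          generalize Real.log z = Lz at hlogz ⊢
          generalize A^γ = Ag
          have h1 : Lz ≠ 0 := ne_of_gt hlogz
          have h2 : t ≠ 0 := ne_of_gt hzγ
          field_simp
          ring
end
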